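/- Every strong 2-exchange system is concave: if I is an independence system such that for all X, Y ∈ I there exists a bipartite graph G(X,Y) on color classes X∖Y and Y∖X with maximum degree at most 2 such that A ∪ (Y ∖ N(A)) ∈ I for every A ⊆ X∖Y, then for every nonnegative weight function the function k ↦ OPT_k is concave. -/

import Mathlib

lemma exists_closer_aux {V : Type*} {G : SimpleGraph V} {r v : V}
    (h : G.Reachable v r) (hvr : v ≠ r) :
    ∃ u, G.Adj v u ∧ G.dist r u < G.dist r v := by
  obtain ⟨p, hp⟩ := h.exists_walk_length_eq_dist
  cases p with
  | nil => exact absurd rfl hvr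
  | @cons _ u _ hadj q =>
    refine ⟨u, hadj, ?_⟩
    have h1 : G.dist u r ≤ q.length := SimpleGraph.dist_le q
    rw [SimpleGraph.Walk.length_cons] at hp
    rw [SimpleGraph.dist_comm (u := r) (v := u), SimpleGraph.dist_comm (u := r) (v := v)]
    omega

lemma comp_count_aux {V : Type*} [Fintype V] [DecidableEq V]
    (G : SimpleGraph V)
    (adj : V → V → Bool)
    (hGa : ∀ a b, G.Adj a b ↔ a ≠ b ∧ (adj a b = true ∨ adj b a = true))
    (D F : Finset V) (hDF : Disjoint D F)
    (hadj : ∀ e f, adj e f = true → e ∈ D ∧ f ∈ F)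
    (hdegD : ∀ e ∈ D, (F.filter (fun f => adj e f = true)).card ≤ 2)
    (hdegF : ∀ f ∈ F, (D.filter (fun e => adj e f = true)).card ≤ 2)
    (c : G.ConnectedComponent)
    (Dc Fc : Finset V)
    (hDcm : ∀ v, v ∈ Dc ↔ v ∈ D ∧ G.connectedComponentMk v = c)
    (hFcm : ∀ v, v ∈ Fc ↔ v ∈ F ∧ G.connectedComponentMk v = c) :
    Dc.card ≤ Fc.card + 1 ∧ Fc.card ≤ Dc.card + 1 := by
  classical
  set comp := G.connectedComponentMk with hcomp
  have hne : ∀ {e f}, adj e f = true → e ≠ f := by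
    intro e f hef h
    apply Finset.disjoint_left.mp hDF (hadj _ _ hef).1
    rw [h]
    exact (hadj _ _ hef).2
  have hGadj : ∀ {e f}, adj e f = true → G.Adj e f := by
    intro e f hef
    exact (hGa _ _).mpr ⟨hne hef, Or.inl hef⟩
  have hcomp_eq : ∀ {e f}, adj e f = true → comp e = comp f := by
    intro e f hef
    exact SimpleGraph.ConnectedComponent.connectedComponentMk_eq_of_adj (hGadj hef)
  set Ec : Finset (V × V) := (D ×ˢ F).filter (fun p => adj p.1 p.2 = true ∧ comp p.1 = c) with hEc
  have hcard1 : Ec.card ≤ 2 * Fc.card := by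
    rw [Finset.card_eq_sum_card_fiberwise (f := Prod.snd) (t := Fc)
      (fun p hp => by
        simp only [Finset.mem_coe, hEc, Finset.mem_filter, Finset.mem_product] at hp
        exact (hFcm _).mpr ⟨hp.1.2, by rw [← hcomp_eq hp.2.1]; exact hp.2.2⟩)]
    calc ∑ f ∈ Fc, (Ec.filter (fun p => p.2 = f)).card
        ≤ ∑ f ∈ Fc, 2 := by
          refine Finset.sum_le_sum (fun f hf => ?_)
          have h2 : (Ec.filter (fun p => p.2 = f)).card
              ≤ (D.filter (fun e => adj e f = true)).card := by
            refine Finset.card_le_card_of_injOn Prod.fst (fun p hp => ?_) ?_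
            · simp only [Finset.mem_coe, Finset.mem_filter, hEc, Finset.mem_product] at hp
              obtain ⟨⟨hp1, hp2⟩, rfl⟩ := hp
              exact Finset.mem_filter.mpr ⟨hp1.1, hp2.1⟩
            · intro p hp q hq hpq
              simp only [Finset.coe_filter, Set.mem_setOf_eq] at hp hq
              exact Prod.ext hpq (hp.2.trans hq.2.symm)
          exact h2.trans (hdegF f ((hFcm f).mp hf).1)
      _ = 2 * Fc.card := by rw [Finset.sum_const, smul_eq_mul, mul_comm]
  have hcard2 : Ec.card ≤ 2 * Dc.card := by
    rw [Finset.card_eq_sum_card_fiberwise (f := Prod.fst) (t := Dc)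
      (fun p hp => by
        simp only [Finset.mem_coe, hEc, Finset.mem_filter, Finset.mem_product] at hp
        exact (hDcm _).mpr ⟨hp.1.1, hp.2.2⟩)]
    calc ∑ e ∈ Dc, (Ec.filter (fun p => p.1 = e)).card
        ≤ ∑ e ∈ Dc, 2 := by
          refine Finset.sum_le_sum (fun e he => ?_)
          have h2 : (Ec.filter (fun p => p.1 = e)).card
              ≤ (F.filter (fun f => adj e f = true)).card := by
            refine Finset.card_le_card_of_injOn Prod.snd (fun p hp => ?_) ?_
            · simp only [Finset.mem_coe, Finset.mem_filter, hEc, Finset.mem_product] at hp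
              obtain ⟨⟨hp1, hp2⟩, rfl⟩ := hp
              exact Finset.mem_filter.mpr ⟨hp1.2, hp2.1⟩
            · intro p hp q hq hpq
              simp only [Finset.coe_filter, Set.mem_setOf_eq] at hp hq
              exact Prod.ext (hp.2.trans hq.2.symm) hpq
          exact h2.trans (hdegD e ((hDcm e).mp he).1)
      _ = 2 * Dc.card := by rw [Finset.sum_const, smul_eq_mul, mul_comm]
  have hdisj : Disjoint Dc Fc := by
    refine Finset.disjoint_left.mpr (fun {v} hv1 hv2 => ?_)
    exact Finset.disjoint_left.mp hDF ((hDcm _).mp hv1).1 ((hFcm _).mp hv2).1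
  have hcard3 : Dc.card + Fc.card ≤ Ec.card + 1 := by
    rcases (Dc ∪ Fc).eq_empty_or_nonempty with hem | ⟨r, hr⟩
    · have h0 := Finset.union_eq_empty.mp hem
      simp [h0.1, h0.2]
    · have hmemc : ∀ v ∈ Dc ∪ Fc, comp v = c := by
        intro v hv
        rcases Finset.mem_union.mp hv with h | h
        · exact ((hDcm _).mp h).2
        · exact ((hFcm _).mp h).2
      have hreach : ∀ v ∈ Dc ∪ Fc, G.Reachable v r := by
        intro v hv
        exact SimpleGraph.ConnectedComponent.exact ((hmemc v hv).trans (hmemc r hr).symm)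
      set u : V → V := fun v =>
        if h : ∃ u, G.Adj v u ∧ G.dist r u < G.dist r v then h.choose else v with hu
      have hu_spec : ∀ v ∈ (Dc ∪ Fc).erase r, G.Adj v (u v) ∧ G.dist r (u v) < G.dist r v := by
        intro v hv
        have hvr : v ≠ r := Finset.ne_of_mem_erase hv
        have hex2 : ∃ u, G.Adj v u ∧ G.dist r u < G.dist r v :=
          exists_closer_aux (hreach v (Finset.mem_of_mem_erase hv)) hvr
        rw [hu]; simp only [dif_pos hex2]; exact hex2.choose_spec
      have hdir : ∀ v ∈ (Dc ∪ Fc).erase r,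
          (v ∈ D → adj v (u v) = true) ∧ (v ∈ F → adj (u v) v = true) := by
        intro v hv
        obtain ⟨hadj', -⟩ := hu_spec v hv
        obtain ⟨hvne, hor⟩ := (hGa _ _).mp hadj'
        constructor
        · intro hvD
          rcases hor with h | h
          · exact h
          · exact absurd (hadj _ _ h).2 (Finset.disjoint_left.mp hDF hvD)
        · intro hvF
          rcases hor with h | h
          · exact absurd (hadj _ _ h).1 (Finset.disjoint_right.mp hDF hvF)
          · exact h
      set ψ : V → V × V := fun v => if v ∈ D then (v, u v) else (u v, v) with hψ
      have hmaps : ∀ v ∈ (Dc ∪ Fc).erase r, ψ v ∈ Ec := by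
        intro v hv
        have hvc := hmemc v (Finset.mem_of_mem_erase hv)
        obtain ⟨hD, hF⟩ := hdir v hv
        by_cases hvD : v ∈ D
        · have ha := hD hvD
          simp only [hψ, if_pos hvD, hEc, Finset.mem_filter, Finset.mem_product]
          exact ⟨⟨(hadj _ _ ha).1, (hadj _ _ ha).2⟩, ha, hvc⟩
        · have hvF : v ∈ F := by
            rcases Finset.mem_union.mp (Finset.mem_of_mem_erase hv) with h | h
            · exact absurd ((hDcm _).mp h).1 hvD
            · exact ((hFcm _).mp h).1
          have ha := hF hvF
          simp only [hψ, if_neg hvD, hEc, Finset.mem_filter, Finset.mem_product]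
          exact ⟨⟨(hadj _ _ ha).1, (hadj _ _ ha).2⟩, ha, (hcomp_eq ha).trans hvc⟩
      have hinj : Set.InjOn ψ ((Dc ∪ Fc).erase r : Finset V) := by
        intro v1 hv1 v2 hv2 heq
        rw [Finset.mem_coe] at hv1 hv2
        by_cases h1 : v1 ∈ D <;> by_cases h2 : v2 ∈ D <;>
          simp only [hψ, if_pos, if_neg, h1, h2, if_true, if_false, Prod.mk.injEq] at heq
        · exact heq.1
        · exfalso
          obtain ⟨-, hlt1⟩ := hu_spec v1 hv1
          obtain ⟨-, hlt2⟩ := hu_spec v2 hv2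
          rw [heq.2] at hlt1
          rw [← heq.1] at hlt2
          omega
        · exfalso
          obtain ⟨-, hlt1⟩ := hu_spec v1 hv1
          obtain ⟨-, hlt2⟩ := hu_spec v2 hv2
          rw [← heq.2] at hlt2
          rw [heq.1] at hlt1
          omega
        · exact heq.2
      have hc1 : ((Dc ∪ Fc).erase r).card ≤ Ec.card :=
        Finset.card_le_card_of_injOn ψ hmaps hinj
      have hc2 : (Dc ∪ Fc).card = Dc.card + Fc.card := Finset.card_union_of_disjoint hdisj
      have hc3 : ((Dc ∪ Fc).erase r).card = (Dc ∪ Fc).card - 1 := Finset.card_erase_of_mem hr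
      have hc4 : 1 ≤ (Dc ∪ Fc).card := Finset.card_pos.mpr ⟨r, hr⟩
      omega
  omega

lemma balance_aux {α : Type*} [DecidableEq α] (a b : α → ℕ) (s : Finset α)
    (h : ∀ x ∈ s, a x ≤ b x + 1 ∧ b x ≤ a x + 1) :
    ∃ σ : α → Bool,
      ((∑ x ∈ s, if σ x then a x else b x) ≤ (∑ x ∈ s, if σ x then b x else a x) + 1 ∧
       (∑ x ∈ s, if σ x then b x else a x) ≤ (∑ x ∈ s, if σ x then a x else b x) + 1) := by
  classical
  induction s using Finset.induction_on with
  | empty => exact ⟨fun _ => true, by simp⟩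
  | @insert x s hx ih =>
    obtain ⟨σ, h1, h2⟩ := ih (fun y hy => h y (Finset.mem_insert_of_mem hy))
    obtain ⟨hab1, hab2⟩ := h x (Finset.mem_insert_self x s)
    have hs : ∀ (v : Bool) (f g : α → ℕ),
        (∑ y ∈ insert x s, if (Function.update σ x v) y then f y else g y)
          = (if v then f x else g x) + ∑ y ∈ s, if σ y then f y else g y := by
      intro v f g
      rw [Finset.sum_insert hx, Function.update_self]
      congr 1
      refine Finset.sum_congr rfl (fun y hy => ?_)
      rw [Function.update_of_ne (by rintro rfl; exact hx hy)]
    by_cases hc : (∑ x ∈ s, if σ x then a x else b x) ≤ (∑ x ∈ s, if σ x then b x else a x)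
    · by_cases hd : b x ≤ a x
      · exact ⟨Function.update σ x true, by rw [hs true a b, hs true b a]; simp; omega⟩
      · exact ⟨Function.update σ x false, by rw [hs false a b, hs false b a]; simp; omega⟩
    · by_cases hd : b x ≤ a x
      · exact ⟨Function.update σ x false, by rw [hs false a b, hs false b a]; simp; omega⟩
      · exact ⟨Function.update σ x true, by rw [hs true a b, hs true b a]; simp; omega⟩

/-- Every strong 2-exchange system is concave: if, for all independent `X, Y`, there is a
bipartite exchange graph on color classes `X∖Y` and `Y∖X`, of maximum degree at most 2,
such that `A ∪ (Y ∖ N(A))` is independent for every `A ⊆ X∖Y`, then for every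
nonnegative weight function the map `k ↦ OPT_k` is concave. -/
theorem stmt_13 {E : Type*} [Fintype E] [DecidableEq E]
    (I : Finset E → Prop) (hne : I ∅) (hdc : ∀ S T : Finset E, S ⊆ T → I T → I S)
    (hex : ∀ X Y : Finset E, I X → I Y → ∃ adj : E → E → Bool,
      (∀ e f, adj e f = true → e ∈ X \ Y ∧ f ∈ Y \ X) ∧
      (∀ e ∈ X \ Y, ((Y \ X).filter (fun f => adj e f = true)).card ≤ 2) ∧
      (∀ f ∈ Y \ X, ((X \ Y).filter (fun e => adj e f = true)).card ≤ 2) ∧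
      (∀ A ⊆ X \ Y,
        I (A ∪ (Y \ ((Y \ X).filter (fun f => ∃ e ∈ A, adj e f = true)))))) :
    ∀ w : E → ℝ, (∀ e, 0 ≤ w e) → ∀ OPT : ℕ → ℝ,
      (∀ k, IsGreatest {x : ℝ | ∃ S : Finset E, I S ∧ S.card ≤ k ∧ x = ∑ e ∈ S, w e}
        (OPT k)) →
      ∀ k, OPT k + OPT (k + 2) ≤ 2 * OPT (k + 1) := by
  intro w hw OPT hOPT k
  classical
  obtain ⟨X, hIX, hXc, hXw⟩ := (hOPT k).1
  obtain ⟨Y, hIY, hYc, hYw⟩ := (hOPT (k + 2)).1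
  obtain ⟨adj, hadj, hdegD, hdegF, hexA⟩ := hex X Y hIX hIY
  set D := X \ Y with hD
  set F := Y \ X with hF
  set C := X ∩ Y with hC
  have hDF : Disjoint D F := disjoint_sdiff_sdiff
  set G := SimpleGraph.fromRel (fun a b => adj a b = true) with hG
  have hGa : ∀ a b, G.Adj a b ↔ a ≠ b ∧ (adj a b = true ∨ adj b a = true) :=
    fun a b => SimpleGraph.fromRel_adj _ a b
  set comp := G.connectedComponentMk with hcomp
  haveI : Fintype G.ConnectedComponent :=
    @Quotient.fintype _ _ G.reachableSetoid (Classical.decRel _)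
  set d : G.ConnectedComponent → ℕ := fun c => (D.filter (fun e => comp e = c)).card with hd
  set f : G.ConnectedComponent → ℕ := fun c => (F.filter (fun e => comp e = c)).card with hf
  have hkey : ∀ c ∈ (Finset.univ : Finset G.ConnectedComponent), d c ≤ f c + 1 ∧ f c ≤ d c + 1 := by
    intro c _
    exact comp_count_aux G adj hGa D F hDF hadj hdegD hdegF c _ _
      (fun v => Finset.mem_filter) (fun v => Finset.mem_filter)
  obtain ⟨σ, hbal1, hbal2⟩ := balance_aux d f Finset.univ hkey
  -- the two split sets
  set D1 := D.filter (fun e => σ (comp e) = true) with hD1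
  set D2 := D.filter (fun e => ¬ σ (comp e) = true) with hD2
  set F1 := F.filter (fun e => σ (comp e) = true) with hF1
  set F2 := F.filter (fun e => ¬ σ (comp e) = true) with hF2
  -- fiberwise counting
  have hfibP : ∀ (S : Finset E), (S.filter (fun e => σ (comp e) = true)).card
      = ∑ c : G.ConnectedComponent, if σ c then (S.filter (fun e => comp e = c)).card else 0 := by
    intro S
    rw [Finset.card_eq_sum_card_fiberwise (f := comp) (t := Finset.univ)
      (fun x _ => Finset.mem_univ _)]
    refine Finset.sum_congr rfl (fun c _ => ?_)
    by_cases hσ : σ c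
    · rw [if_pos hσ]
      congr 1
      ext e
      simp only [Finset.mem_filter]
      constructor
      · rintro ⟨⟨h1, _⟩, h3⟩; exact ⟨h1, h3⟩
      · rintro ⟨h1, h3⟩; exact ⟨⟨h1, by rw [h3]; exact hσ⟩, h3⟩
    · rw [if_neg hσ]
      rw [Finset.card_eq_zero]
      ext e
      simp only [Finset.mem_filter, Finset.notMem_empty, iff_false]
      rintro ⟨⟨_, h2⟩, h3⟩
      exact hσ (h3 ▸ h2)
  have hfibN : ∀ (S : Finset E), (S.filter (fun e => ¬ σ (comp e) = true)).card
      = ∑ c : G.ConnectedComponent, if σ c then 0 else (S.filter (fun e => comp e = c)).card := by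
    intro S
    rw [Finset.card_eq_sum_card_fiberwise (f := comp) (t := Finset.univ)
      (fun x _ => Finset.mem_univ _)]
    refine Finset.sum_congr rfl (fun c _ => ?_)
    by_cases hσ : σ c
    · rw [if_pos hσ]
      rw [Finset.card_eq_zero]
      ext e
      simp only [Finset.mem_filter, Finset.notMem_empty, iff_false]
      rintro ⟨⟨_, h2⟩, h3⟩
      exact h2 (h3 ▸ hσ)
    · rw [if_neg hσ]
      congr 1
      ext e
      simp only [Finset.mem_filter]
      constructor
      · rintro ⟨⟨h1, _⟩, h3⟩; exact ⟨h1, h3⟩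
      · rintro ⟨h1, h3⟩; exact ⟨⟨h1, by rw [h3]; exact hσ⟩, h3⟩
  have hfibT : ∀ (S : Finset E), S.card
      = ∑ c : G.ConnectedComponent, (S.filter (fun e => comp e = c)).card := by
    intro S
    exact Finset.card_eq_sum_card_fiberwise (fun x _ => Finset.mem_univ _)
  -- size identities
  have hs1 : D1.card + F2.card = ∑ c : G.ConnectedComponent, if σ c then d c else f c := by
    rw [hD1, hF2, hfibP D, hfibN F, ← Finset.sum_add_distrib]
    refine Finset.sum_congr rfl (fun c _ => ?_)
    by_cases hσ : σ c <;> simp [hσ, hd, hf]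
  have hs2 : D2.card + F1.card = ∑ c : G.ConnectedComponent, if σ c then f c else d c := by
    rw [hD2, hF1, hfibN D, hfibP F, ← Finset.sum_add_distrib]
    refine Finset.sum_congr rfl (fun c _ => ?_)
    by_cases hσ : σ c <;> simp [hσ, hd, hf]
  have hstot : (∑ c : G.ConnectedComponent, if σ c then d c else f c)
      + (∑ c : G.ConnectedComponent, if σ c then f c else d c) = D.card + F.card := by
    rw [← Finset.sum_add_distrib, hfibT D, hfibT F, ← Finset.sum_add_distrib]
    refine Finset.sum_congr rfl (fun c _ => ?_)
    by_cases hσ : σ c <;> simp [hσ, hd, hf] <;> omega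
  have hXcd : D.card + C.card = X.card := Finset.card_sdiff_add_card_inter X Y
  have hYcd : F.card + C.card = Y.card := by
    rw [hF, hC, Finset.inter_comm X Y]
    exact Finset.card_sdiff_add_card_inter Y X
  -- adjacency implies same component
  have hcomp_eq : ∀ {e g}, adj e g = true → comp e = comp g := by
    intro e g heg
    refine SimpleGraph.ConnectedComponent.connectedComponentMk_eq_of_adj ((hGa _ _).mpr ⟨?_, Or.inl heg⟩)
    intro hh
    apply Finset.disjoint_left.mp hDF (hadj _ _ heg).1
    rw [hh]
    exact (hadj _ _ heg).2
  -- the two candidate sets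
  set S1 := D1 ∪ (C ∪ F2) with hS1
  set S2 := D2 ∪ (C ∪ F1) with hS2
  -- independence
  have hI1 : I S1 := by
    refine hdc _ _ ?_ (hexA D1 (Finset.filter_subset _ _))
    rw [hS1]
    refine Finset.union_subset_union_right ?_
    intro x hx
    rcases Finset.mem_union.mp hx with hxC | hxF2
    · refine Finset.mem_sdiff.mpr ⟨(Finset.mem_inter.mp hxC).2, ?_⟩
      intro hmem
      exact (Finset.mem_sdiff.mp (Finset.mem_filter.mp hmem).1).2 (Finset.mem_inter.mp hxC).1
    · have hxF := (Finset.mem_filter.mp hxF2).1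
      refine Finset.mem_sdiff.mpr ⟨(Finset.mem_sdiff.mp hxF).1, ?_⟩
      intro hmem
      obtain ⟨e, heD1, hadje⟩ := (Finset.mem_filter.mp hmem).2
      have h1 : σ (comp e) = true := (Finset.mem_filter.mp heD1).2
      have h2 : ¬ σ (comp x) = true := (Finset.mem_filter.mp hxF2).2
      exact h2 (hcomp_eq hadje ▸ h1)
  have hI2 : I S2 := by
    refine hdc _ _ ?_ (hexA D2 (Finset.filter_subset _ _))
    rw [hS2]
    refine Finset.union_subset_union_right ?_
    intro x hx
    rcases Finset.mem_union.mp hx with hxC | hxF1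
    · refine Finset.mem_sdiff.mpr ⟨(Finset.mem_inter.mp hxC).2, ?_⟩
      intro hmem
      exact (Finset.mem_sdiff.mp (Finset.mem_filter.mp hmem).1).2 (Finset.mem_inter.mp hxC).1
    · have hxF := (Finset.mem_filter.mp hxF1).1
      refine Finset.mem_sdiff.mpr ⟨(Finset.mem_sdiff.mp hxF).1, ?_⟩
      intro hmem
      obtain ⟨e, heD2, hadje⟩ := (Finset.mem_filter.mp hmem).2
      have h1 : ¬ σ (comp e) = true := (Finset.mem_filter.mp heD2).2
      have h2 : σ (comp x) = true := (Finset.mem_filter.mp hxF1).2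
      exact h1 (hcomp_eq hadje ▸ h2)
  -- disjointness
  have hdDC : Disjoint D C := Finset.disjoint_sdiff_inter X Y
  have hdFC : Disjoint F C := by
    rw [hF, hC, Finset.inter_comm X Y]
    exact Finset.disjoint_sdiff_inter Y X
  have hdD1 : Disjoint D1 (C ∪ F2) := by
    refine Finset.disjoint_union_right.mpr ⟨?_, ?_⟩
    · exact (hdDC.mono_left (Finset.filter_subset _ _))
    · exact ((hDF.mono_left (Finset.filter_subset _ _)).mono_right (Finset.filter_subset _ _))
  have hdD2 : Disjoint D2 (C ∪ F1) := by
    refine Finset.disjoint_union_right.mpr ⟨?_, ?_⟩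
    · exact (hdDC.mono_left (Finset.filter_subset _ _))
    · exact ((hDF.mono_left (Finset.filter_subset _ _)).mono_right (Finset.filter_subset _ _))
  have hdCF2 : Disjoint C F2 := (hdFC.symm).mono_right (Finset.filter_subset _ _)
  have hdCF1 : Disjoint C F1 := (hdFC.symm).mono_right (Finset.filter_subset _ _)
  -- cardinalities
  have hcS1 : S1.card = D1.card + (C.card + F2.card) := by
    rw [hS1, Finset.card_union_of_disjoint hdD1, Finset.card_union_of_disjoint hdCF2]
  have hcS2 : S2.card = D2.card + (C.card + F1.card) := by
    rw [hS2, Finset.card_union_of_disjoint hdD2, Finset.card_union_of_disjoint hdCF1]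
  have hS1le : S1.card ≤ k + 1 := by omega
  have hS2le : S2.card ≤ k + 1 := by omega
  -- weights
  have hwS1 : ∑ e ∈ S1, w e = ∑ e ∈ D1, w e + (∑ e ∈ C, w e + ∑ e ∈ F2, w e) := by
    rw [hS1, Finset.sum_union hdD1, Finset.sum_union hdCF2]
  have hwS2 : ∑ e ∈ S2, w e = ∑ e ∈ D2, w e + (∑ e ∈ C, w e + ∑ e ∈ F1, w e) := by
    rw [hS2, Finset.sum_union hdD2, Finset.sum_union hdCF1]
  have hwD : ∑ e ∈ D1, w e + ∑ e ∈ D2, w e = ∑ e ∈ D, w e :=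
    Finset.sum_filter_add_sum_filter_not D _ w
  have hwF : ∑ e ∈ F1, w e + ∑ e ∈ F2, w e = ∑ e ∈ F, w e :=
    Finset.sum_filter_add_sum_filter_not F _ w
  have hwX : ∑ e ∈ X, w e = ∑ e ∈ D, w e + ∑ e ∈ C, w e := by
    conv_lhs => rw [← Finset.sdiff_union_inter X Y]
    rw [Finset.sum_union (Finset.disjoint_sdiff_inter X Y)]
  have hwY : ∑ e ∈ Y, w e = ∑ e ∈ F, w e + ∑ e ∈ C, w e := by
    conv_lhs => rw [← Finset.sdiff_union_inter Y X]
    rw [Finset.sum_union (Finset.disjoint_sdiff_inter Y X), hF, hC, Finset.inter_comm X Y]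
  -- conclusion
  have hub1 : ∑ e ∈ S1, w e ≤ OPT (k + 1) := (hOPT (k + 1)).2 ⟨S1, hI1, hS1le, rfl⟩
  have hub2 : ∑ e ∈ S2, w e ≤ OPT (k + 1) := (hOPT (k + 1)).2 ⟨S2, hI2, hS2le, rfl⟩
  rw [hXw, hYw]
  linarith
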